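/- For any finite graded poset P, if Row^{r(P)+2} acting on P-partitions of height m equals the map induced by a poset automorphism δ of P, then δ is an involution. -/

import Mathlib

open scoped Classical

/-- A `P`-partition of height `m`: a weakly order-preserving map `P → {0, ..., m}`. -/
def IsPPart {P : Type*} [PartialOrder P] (m : ℕ) (f : P → ℕ) : Prop :=
  (∀ p, f p ≤ m) ∧ Monotone f

/-- The new value of the piecewise-linear toggle at `p`:
`min{π(r) : p ⋖ r} + max{π(r) : r ⋖ p} − π(p)`, with `min ∅ = m` and `max ∅ = 0`. -/
noncomputable def togVal {P : Type*} [PartialOrder P] [Fintype P]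
    (m : ℕ) (f : P → ℕ) (p : P) : ℕ :=
  (insert m ((Finset.univ.filter fun r => p ⋖ r).image f)).min'
      (Finset.insert_nonempty _ _) +
    (insert 0 ((Finset.univ.filter fun r => r ⋖ p).image f)).max'
      (Finset.insert_nonempty _ _) -
    f p

/-- The piecewise-linear toggle `τ_p` on `P`-partitions of height `m`. -/
noncomputable def tog {P : Type*} [PartialOrder P] [Fintype P]
    (m : ℕ) (p : P) (f : P → ℕ) : P → ℕ :=
  fun q => if q = p then togVal m f p else f q

/-- The rank toggle `τ_i`: simultaneously (equivalently, in any order) toggle all elements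
of rank `i`. -/
noncomputable def rankTog {P : Type*} [PartialOrder P] [Fintype P]
    (rk : P → ℕ) (m i : ℕ) (f : P → ℕ) : P → ℕ :=
  fun q => if rk q = i then togVal m f q else f q

/-- `rowFrom rk m r j = τ_{r-j} ∘ τ_{r-j+1} ∘ ⋯ ∘ τ_r` (rank toggles, top rank first). -/
noncomputable def rowFrom {P : Type*} [PartialOrder P] [Fintype P]
    (rk : P → ℕ) (m r : ℕ) : ℕ → (P → ℕ) → (P → ℕ)
  | 0, f => rankTog rk m r f
  | j + 1, f => rankTog rk m (r - (j + 1)) (rowFrom rk m r j f)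

/-- Rowmotion `Row = τ_0 ∘ τ_1 ∘ ⋯ ∘ τ_r` on `P`-partitions of height `m`, for a graded
poset with rank function `rk` and top rank `r`. -/
noncomputable def rowm {P : Type*} [PartialOrder P] [Fintype P]
    (rk : P → ℕ) (m r : ℕ) (f : P → ℕ) : P → ℕ :=
  rowFrom rk m r r f

noncomputable def rvacAux {P : Type*} [PartialOrder P] [Fintype P]
    (rk : P → ℕ) (m r : ℕ) : ℕ → (P → ℕ) → (P → ℕ)
  | 0, f => rowFrom rk m r 0 f
  | j + 1, f => rvacAux rk m r j (rowFrom rk m r (j + 1) f)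

/-- Rowvacuation `Rvac = (τ_r) ∘ (τ_{r-1} ∘ τ_r) ∘ ⋯ ∘ (τ_0 ∘ ⋯ ∘ τ_{r-1} ∘ τ_r)`. -/
noncomputable def rvac {P : Type*} [PartialOrder P] [Fintype P]
    (rk : P → ℕ) (m r : ℕ) (f : P → ℕ) : P → ℕ :=
  rvacAux rk m r r f

/-- Dual rowvacuation `Rvac*(π) = (Rvac(π*))*`, where `π*(p) = m − π(p)` is a
`P*`-partition of the dual poset (whose rank function is `p ↦ r − rk p`). -/
noncomputable def rvacStar {P : Type*} [PartialOrder P] [Fintype P]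
    (rk : P → ℕ) (m r : ℕ) (f : P → ℕ) : P → ℕ :=
  fun p => m -
    rvac (P := Pᵒᵈ) (fun q => r - rk (OrderDual.ofDual q)) m r
      (fun q => m - f (OrderDual.ofDual q)) (OrderDual.toDual p)

section A1
variable {P : Type*} [PartialOrder P] [Fintype P]

noncomputable def upMin (m : ℕ) (f : P → ℕ) (p : P) : ℕ :=
  (insert m ((Finset.univ.filter fun r => p ⋖ r).image f)).min'
      (Finset.insert_nonempty _ _)

noncomputable def downMax (m : ℕ) (f : P → ℕ) (p : P) : ℕ :=
  (insert 0 ((Finset.univ.filter fun r => r ⋖ p).image f)).max'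
      (Finset.insert_nonempty _ _)

lemma togVal_def (m : ℕ) (f : P → ℕ) (p : P) :
    togVal m f p = upMin m f p + downMax m f p - f p := rfl

lemma upMin_le_m (m : ℕ) (f : P → ℕ) (p : P) : upMin m f p ≤ m :=
  Finset.min'_le _ _ (Finset.mem_insert_self _ _)

lemma upMin_le (m : ℕ) (f : P → ℕ) {p x : P} (h : p ⋖ x) : upMin m f p ≤ f x :=
  Finset.min'_le _ _ (Finset.mem_insert_of_mem
    (Finset.mem_image_of_mem f (by simp [h])))

lemma le_downMax (m : ℕ) (f : P → ℕ) {p x : P} (h : x ⋖ p) : f x ≤ downMax m f p :=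
  Finset.le_max' _ _ (Finset.mem_insert_of_mem
    (Finset.mem_image_of_mem f (by simp [h])))

lemma le_upMin (m : ℕ) {f : P → ℕ} (p : P) (hb : f p ≤ m) (hf : Monotone f) :
    f p ≤ upMin m f p := by
  apply Finset.le_min'
  intro y hy
  rcases Finset.mem_insert.1 hy with rfl | hy
  · exact hb
  · obtain ⟨x, hx, rfl⟩ := Finset.mem_image.1 hy
    exact hf (Finset.mem_filter.1 hx).2.le

lemma downMax_le (m : ℕ) {f : P → ℕ} (p : P) (hf : Monotone f) :
    downMax m f p ≤ f p := by
  apply Finset.max'_le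
  intro y hy
  rcases Finset.mem_insert.1 hy with rfl | hy
  · exact Nat.zero_le _
  · obtain ⟨x, hx, rfl⟩ := Finset.mem_image.1 hy
    exact hf (Finset.mem_filter.1 hx).2.le

lemma upMin_congr (m : ℕ) {f g : P → ℕ} (p : P)
    (h : ∀ x, p ⋖ x → f x = g x) : upMin m f p = upMin m g p := by
  unfold upMin
  congr 2
  apply Finset.image_congr
  intro x hx
  exact h x (by simpa using hx)

lemma downMax_congr (m : ℕ) {f g : P → ℕ} (p : P)
    (h : ∀ x, x ⋖ p → f x = g x) : downMax m f p = downMax m g p := by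
  unfold downMax
  congr 2
  apply Finset.image_congr
  intro x hx
  exact h x (by simpa using hx)

lemma togVal_congr (m : ℕ) {f g : P → ℕ} (p : P) (h0 : f p = g p)
    (h1 : ∀ x, p ⋖ x → f x = g x) (h2 : ∀ x, x ⋖ p → f x = g x) :
    togVal m f p = togVal m g p := by
  rw [togVal_def, togVal_def, upMin_congr m p h1, downMax_congr m p h2, h0]

end A1

section A2
variable {P : Type*} [PartialOrder P] [Fintype P]

lemma monotone_of_covby {g : P → ℕ} (hg : ∀ a b : P, a ⋖ b → g a ≤ g b) :
    Monotone g := by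
  have key : ∀ n (p q : P), p ≤ q →
      (Finset.univ.filter fun x => p < x ∧ x ≤ q).card ≤ n → g p ≤ g q := by
    intro n
    induction n with
    | zero =>
      intro p q hpq hcard
      rcases eq_or_lt_of_le hpq with rfl | hlt
      · exact le_rfl
      · exfalso
        have hq : q ∈ Finset.univ.filter fun x => p < x ∧ x ≤ q := by
          simp [hlt]
        have := Finset.card_pos.2 ⟨q, hq⟩
        omega
    | succ n ih =>
      intro p q hpq hcard
      rcases eq_or_lt_of_le hpq with rfl | hlt
      · exact le_rfl
      · obtain ⟨c, hc, hcmin'⟩ := Finset.exists_minimal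
          (s := Finset.univ.filter fun x => p < x ∧ x ≤ q)
          ⟨q, by simp [hlt]⟩
        have hcmin : ∀ y ∈ Finset.univ.filter (fun x => p < x ∧ x ≤ q), ¬ y < c :=
          fun y hy hyc => hyc.not_ge (hcmin' hy hyc.le)
        simp only [Finset.mem_filter, Finset.mem_univ, true_and] at hc
        have hpc : p ⋖ c := by
          refine ⟨hc.1, fun y hy hyc => ?_⟩
          exact hcmin y (by simp [hy, le_trans hyc.le hc.2]) hyc
        have hsub : (Finset.univ.filter fun x => c < x ∧ x ≤ q) ⊆
            (Finset.univ.filter fun x => p < x ∧ x ≤ q).erase c := by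
          intro x hx
          simp only [Finset.mem_filter, Finset.mem_univ, true_and] at hx
          refine Finset.mem_erase.2 ⟨fun hxc => ?_, by simp [lt_trans hc.1 hx.1, hx.2]⟩
          subst hxc; exact lt_irrefl _ hx.1
        have hcard' : (Finset.univ.filter fun x => c < x ∧ x ≤ q).card ≤ n := by
          have h1 := Finset.card_le_card hsub
          have h2 := Finset.card_erase_of_mem (a := c)
            (s := Finset.univ.filter fun x => p < x ∧ x ≤ q) (by simp [hc.1, hc.2])
          omega
        exact le_trans (hg _ _ hpc) (ih c q hc.2 hcard')
  intro p q hpq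
  exact key _ p q hpq le_rfl

lemma exists_covby_of_not_isMin {p : P} (h : ¬ IsMin p) : ∃ q, q ⋖ p := by
  have : ∃ b, b < p := by
    rw [not_isMin_iff] at h; exact h
  obtain ⟨b, hb⟩ := this
  obtain ⟨c, hc, hcmax'⟩ := Finset.exists_maximal
    (s := Finset.univ.filter fun x => x < p) ⟨b, by simp [hb]⟩
  have hcmax : ∀ y ∈ Finset.univ.filter (fun x => x < p), ¬ c < y :=
    fun y hy hcy => hcy.not_ge (hcmax' hy hcy.le)
  simp only [Finset.mem_filter, Finset.mem_univ, true_and] at hc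
  exact ⟨c, hc, fun y hcy hyp => hcmax y (by simp [hyp]) hcy⟩

end A2

section A3
variable {P : Type*} [PartialOrder P] [Fintype P]
variable {rk : P → ℕ} {m : ℕ}

lemma rankTog_eq {i : ℕ} {f : P → ℕ} {q : P} (h : rk q = i) :
    rankTog rk m i f q = togVal m f q := if_pos h

lemma rankTog_ne {i : ℕ} {f : P → ℕ} {q : P} (h : rk q ≠ i) :
    rankTog rk m i f q = f q := if_neg h

variable (hcov : ∀ p q : P, p ⋖ q → rk q = rk p + 1)
include hcov

/-- the toggled value only uses `f` at `q` and at covers of `q`; toggling a rank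
`≠ rk q ± 1, rk q` does not change it. -/
lemma togVal_rankTog {i : ℕ} {f : P → ℕ} {q : P}
    (hi : rk q ≠ i) (hi1 : rk q + 1 ≠ i) (hi2 : rk q ≠ i + 1) :
    togVal m (rankTog rk m i f) q = togVal m f q := by
  apply togVal_congr
  · exact rankTog_ne hi
  · intro x hx
    have := hcov q x hx
    exact rankTog_ne (by omega)
  · intro x hx
    have := hcov x q hx
    exact rankTog_ne (by omega)

/-- rank toggles at ranks differing by ≥ 2 commute (for arbitrary `f`). -/
lemma rankTog_comm {i j : ℕ} (hij : i + 2 ≤ j) (f : P → ℕ) :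
    rankTog rk m i (rankTog rk m j f) = rankTog rk m j (rankTog rk m i f) := by
  funext q
  by_cases hi : rk q = i
  · have hj : rk q ≠ j := by omega
    rw [rankTog_eq hi, rankTog_ne hj, rankTog_eq hi,
      togVal_rankTog hcov (by omega) (by omega) (by omega)]
  · by_cases hj : rk q = j
    · rw [rankTog_ne hi, rankTog_eq hj, rankTog_eq hj,
        togVal_rankTog hcov (by omega) (by omega) (by omega)]
    · rw [rankTog_ne hi, rankTog_ne hj, rankTog_ne hj, rankTog_ne hi]

lemma rankTog_isPPart {i : ℕ} {f : P → ℕ} (hf : IsPPart m f) :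
    IsPPart m (rankTog rk m i f) := by
  constructor
  · intro q
    by_cases hi : rk q = i
    · rw [rankTog_eq hi, togVal_def]
      have h1 := downMax_le m q hf.2
      have h2 := upMin_le_m m f q
      omega
    · rw [rankTog_ne hi]; exact hf.1 q
  · apply monotone_of_covby
    intro a b hab
    have hr := hcov a b hab
    by_cases hi : rk a = i
    · rw [rankTog_eq hi, rankTog_ne (by omega), togVal_def]
      have h1 := downMax_le m a hf.2
      have h2 := upMin_le m f hab
      omega
    · rw [rankTog_ne hi]
      by_cases hbi : rk b = i
      · rw [rankTog_eq hbi, togVal_def]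
        have h1 := le_upMin m b (hf.1 b) hf.2
        have h2 := le_downMax m f hab
        omega
      · rw [rankTog_ne hbi]; exact hf.2 hab.le

lemma rankTog_invol {i : ℕ} {f : P → ℕ} (hf : IsPPart m f) :
    rankTog rk m i (rankTog rk m i f) = f := by
  funext q
  by_cases hi : rk q = i
  · rw [rankTog_eq hi]
    have hup : upMin m (rankTog rk m i f) q = upMin m f q := by
      apply upMin_congr
      intro x hx
      have := hcov q x hx
      exact rankTog_ne (by omega)
    have hdn : downMax m (rankTog rk m i f) q = downMax m f q := by
      apply downMax_congr
      intro x hx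
      have := hcov x q hx
      exact rankTog_ne (by omega)
    rw [togVal_def, hup, hdn, rankTog_eq hi, togVal_def]
    have h1 := le_upMin m q (hf.1 q) hf.2
    omega
  · rw [rankTog_ne hi, rankTog_ne hi]

end A3

section A4
variable {P : Type*} [PartialOrder P] [Fintype P]
variable {rk : P → ℕ} {m : ℕ}

lemma togVal_delta (δ : P ≃o P) (f : P → ℕ) (q : P) :
    togVal m (fun x => f (δ x)) q = togVal m f (δ q) := by
  unfold togVal
  have hup : ((Finset.univ.filter fun r => q ⋖ r).image fun x => f (δ x)) =
      (Finset.univ.filter fun r => δ q ⋖ r).image f := by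
    ext y
    simp only [Finset.mem_image, Finset.mem_filter, Finset.mem_univ, true_and]
    constructor
    · rintro ⟨x, hx, rfl⟩
      exact ⟨δ x, (apply_covBy_apply_iff δ).2 hx, rfl⟩
    · rintro ⟨x, hx, rfl⟩
      refine ⟨δ.symm x, ?_, by rw [δ.apply_symm_apply]⟩
      have : δ q ⋖ δ (δ.symm x) := by rwa [δ.apply_symm_apply]
      exact (apply_covBy_apply_iff δ).1 this
  have hdn : ((Finset.univ.filter fun r => r ⋖ q).image fun x => f (δ x)) =
      (Finset.univ.filter fun r => r ⋖ δ q).image f := by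
    ext y
    simp only [Finset.mem_image, Finset.mem_filter, Finset.mem_univ, true_and]
    constructor
    · rintro ⟨x, hx, rfl⟩
      exact ⟨δ x, (apply_covBy_apply_iff δ).2 hx, rfl⟩
    · rintro ⟨x, hx, rfl⟩
      refine ⟨δ.symm x, ?_, by rw [δ.apply_symm_apply]⟩
      have : δ (δ.symm x) ⋖ δ q := by rwa [δ.apply_symm_apply]
      exact (apply_covBy_apply_iff δ).1 this
  have e1 : (insert m ((Finset.univ.filter fun r => q ⋖ r).image fun x => f (δ x))).min'
      (Finset.insert_nonempty _ _) =
      (insert m ((Finset.univ.filter fun r => δ q ⋖ r).image f)).min'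
      (Finset.insert_nonempty _ _) := by
    congr 1
    rw [hup]
  have e2 : (insert 0 ((Finset.univ.filter fun r => r ⋖ q).image fun x => f (δ x))).max'
      (Finset.insert_nonempty _ _) =
      (insert 0 ((Finset.univ.filter fun r => r ⋖ δ q).image f)).max'
      (Finset.insert_nonempty _ _) := by
    congr 1
    rw [hdn]
  rw [e1, e2]

lemma rankTog_delta (δ : P ≃o P) (hrk : ∀ q, rk (δ q) = rk q) (i : ℕ) (f : P → ℕ) :
    rankTog rk m i (fun x => f (δ x)) = fun x => rankTog rk m i f (δ x) := by
  funext q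
  by_cases hi : rk q = i
  · rw [rankTog_eq hi, rankTog_eq (by rw [hrk]; exact hi), togVal_delta]
  · rw [rankTog_ne hi, rankTog_ne (by rw [hrk]; exact hi)]

lemma rk_delta (hcov : ∀ p q : P, p ⋖ q → rk q = rk p + 1)
    (hmin : ∀ p : P, IsMin p → rk p = 0) (δ : P ≃o P) :
    ∀ q, rk (δ q) = rk q := by
  suffices H : ∀ n, ∀ q : P, rk q = n → rk (δ q) = n by
    exact fun q => H (rk q) q rfl
  intro n
  induction n using Nat.strong_induction_on with
  | _ n ih =>
    intro q hq
    by_cases hm : IsMin q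
    · have hm' : IsMin (δ q) := by
        intro b hb
        have : δ.symm b ≤ q := by
          rw [← δ.symm_apply_apply q]; exact δ.symm.monotone hb
        have h2 := hm this
        calc δ q ≤ δ (δ.symm b) := δ.monotone h2
          _ = b := δ.apply_symm_apply b
      rw [hmin _ hm', ← hq, hmin _ hm]
    · obtain ⟨c, hc⟩ := exists_covby_of_not_isMin hm
      have h1 : rk q = rk c + 1 := hcov c q hc
      have h2 : δ c ⋖ δ q := (apply_covBy_apply_iff δ).2 hc
      have h3 : rk (δ q) = rk (δ c) + 1 := hcov _ _ h2
      have h4 : rk (δ c) = rk c := ih (rk c) (by omega) c rfl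
      omega

end A4

section A5
variable {P : Type*} [PartialOrder P] [Fintype P]

noncomputable def tw (rk : P → ℕ) (m : ℕ) : List ℕ → (P → ℕ) → (P → ℕ)
  | [], f => f
  | i :: l, f => rankTog rk m i (tw rk m l f)

variable {rk : P → ℕ} {m : ℕ}

lemma tw_nil (f : P → ℕ) : tw rk m [] f = f := rfl

lemma tw_cons (i : ℕ) (l : List ℕ) (f : P → ℕ) :
    tw rk m (i :: l) f = rankTog rk m i (tw rk m l f) := rfl

lemma tw_append (l₁ l₂ : List ℕ) (f : P → ℕ) :
    tw rk m (l₁ ++ l₂) f = tw rk m l₁ (tw rk m l₂ f) := by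
  induction l₁ with
  | nil => rfl
  | cons i l ih => rw [List.cons_append, tw_cons, tw_cons, ih]

variable (hcov : ∀ p q : P, p ⋖ q → rk q = rk p + 1)
include hcov

lemma tw_isPPart (l : List ℕ) {f : P → ℕ} (hf : IsPPart m f) :
    IsPPart m (tw rk m l f) := by
  induction l with
  | nil => exact hf
  | cons i l ih => exact rankTog_isPPart hcov ih

lemma tw_rankTog_comm {i : ℕ} {l : List ℕ} (hl : ∀ x ∈ l, i + 2 ≤ x) (f : P → ℕ) :
    rankTog rk m i (tw rk m l f) = tw rk m l (rankTog rk m i f) := by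
  induction l with
  | nil => rfl
  | cons j l ih =>
    rw [tw_cons, rankTog_comm hcov (hl j (by simp)), ih (fun x hx => hl x (by simp [hx])),
      tw_cons]

lemma tw_rev_tw (l : List ℕ) {f : P → ℕ} (hf : IsPPart m f) :
    tw rk m l.reverse (tw rk m l f) = f := by
  induction l generalizing f with
  | nil => rfl
  | cons i l ih =>
    rw [List.reverse_cons, tw_cons, tw_append]
    show tw rk m l.reverse (tw rk m [i] (rankTog rk m i (tw rk m l f))) = f
    rw [tw_cons, tw_nil, rankTog_invol hcov (tw_isPPart hcov l hf)]
    exact ih hf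

lemma tw_tw_rev (l : List ℕ) {f : P → ℕ} (hf : IsPPart m f) :
    tw rk m l (tw rk m l.reverse f) = f := by
  have := tw_rev_tw hcov l.reverse hf
  rwa [List.reverse_reverse] at this

omit hcov

lemma tw_delta (δ : P ≃o P) (hrk : ∀ q, rk (δ q) = rk q) (l : List ℕ) (f : P → ℕ) :
    tw rk m l (fun x => f (δ x)) = fun x => tw rk m l f (δ x) := by
  induction l with
  | nil => rfl
  | cons i l ih => rw [tw_cons, ih, rankTog_delta δ hrk, tw_cons]

end A5

/-- ranks `k, k+1, ..., r`. -/
def ascL (r k : ℕ) : List ℕ := List.range' k (r + 1 - k)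

/-- the word for `E_{r-j} = D_{r-j} ∘ ⋯ ∘ D_1 ∘ D_0` read off `rvacAux`. -/
def ELw (r : ℕ) : ℕ → List ℕ
  | 0 => ascL r r
  | j + 1 => ELw r j ++ ascL r (r - (j + 1))

lemma ascL_top (r : ℕ) : ascL r r = [r] := by
  simp [ascL]

lemma ascL_cons {r k : ℕ} (h : k ≤ r) : ascL r k = k :: ascL r (k + 1) := by
  unfold ascL
  have h1 : r + 1 - k = (r + 1 - (k + 1)) + 1 := by omega
  rw [h1, List.range'_succ]

lemma mem_ascL {r k x : ℕ} (hx : x ∈ ascL r k) : k ≤ x := by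
  have := List.mem_range'_1.1 hx
  omega

lemma mem_ELw {r : ℕ} : ∀ j, ∀ x ∈ ELw r j, r - j ≤ x := by
  intro j
  induction j with
  | zero =>
    intro x hx
    have := mem_ascL hx
    omega
  | succ j ih =>
    intro x hx
    rcases List.mem_append.1 hx with hx | hx
    · have := ih x hx; omega
    · have := mem_ascL hx; omega

section A6
variable {P : Type*} [PartialOrder P] [Fintype P]
variable {rk : P → ℕ} {m r : ℕ}

lemma rowFrom_eq_tw : ∀ j ≤ r, ∀ f : P → ℕ,
    rowFrom rk m r j f = tw rk m (ascL r (r - j)) f := by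
  intro j
  induction j with
  | zero =>
    intro _ f
    show rankTog rk m r f = _
    rw [Nat.sub_zero, ascL_top, tw_cons, tw_nil]
  | succ j ih =>
    intro hj f
    show rankTog rk m (r - (j + 1)) (rowFrom rk m r j f) = _
    rw [ih (by omega) f]
    conv_rhs => rw [ascL_cons (show r - (j + 1) ≤ r by omega), tw_cons,
      show r - (j + 1) + 1 = r - j from by omega]

lemma rowm_eq_tw (f : P → ℕ) : rowm rk m r f = tw rk m (ascL r 0) f := by
  have := rowFrom_eq_tw (rk := rk) (m := m) (r := r) r le_rfl f
  rwa [Nat.sub_self] at this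

lemma rvacAux_eq_tw : ∀ j ≤ r, ∀ f : P → ℕ,
    rvacAux rk m r j f = tw rk m (ELw r j) f := by
  intro j
  induction j with
  | zero =>
    intro _ f
    show rowFrom rk m r 0 f = _
    rw [rowFrom_eq_tw 0 (by omega) f, Nat.sub_zero]
    rfl
  | succ j ih =>
    intro hj f
    show rvacAux rk m r j (rowFrom rk m r (j + 1) f) = _
    rw [ih (by omega), rowFrom_eq_tw (j + 1) hj f, ← tw_append]
    rfl

lemma rvac_eq_tw (f : P → ℕ) : rvac rk m r f = tw rk m (ELw r r) f :=
  rvacAux_eq_tw r le_rfl f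

variable (hcov : ∀ p q : P, p ⋖ q → rk q = rk p + 1)
include hcov

/-- The key word identity `E_{k+1} ∘ D_k = D_k⁻¹ ∘ E_{k+1}` (unconditionally in `f`). -/
lemma keyL : ∀ j, j < r → ∀ f : P → ℕ,
    tw rk m (ELw r j) (tw rk m (ascL r (r - 1 - j)) f) =
      tw rk m (ascL r (r - 1 - j)).reverse (tw rk m (ELw r j) f) := by
  intro j
  induction j with
  | zero =>
    intro hr f
    have h0 : ELw r 0 = [r] := by
      show ascL r r = [r]
      exact ascL_top r
    have h1 : ascL r (r - 1 - 0) = [r - 1, r] := by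
      rw [Nat.sub_zero, ascL_cons (by omega), show r - 1 + 1 = r from by omega, ascL_top]
    rw [h0, h1, show ([r - 1, r] : List ℕ).reverse = [r, r - 1] from by simp]
    simp only [tw_cons, tw_nil]
  | succ j ih =>
    intro hj f
    set k := r - 1 - (j + 1) with hk
    have hk2 : k + 1 = r - 1 - j := by omega
    have hEL : ELw r (j + 1) = ELw r j ++ ascL r (k + 1) := by
      show ELw r j ++ ascL r (r - (j + 1)) = _
      rw [show r - (j + 1) = k + 1 from by omega]
    have hasc : ascL r k = k :: ascL r (k + 1) := ascL_cons (by omega)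
    rw [hEL, hasc, List.reverse_cons, tw_cons, tw_append, tw_append, tw_append]
    have step1 : tw rk m (ELw r j) (tw rk m (ascL r (k + 1))
        (rankTog rk m k (tw rk m (ascL r (k + 1)) f))) =
        tw rk m (ascL r (k + 1)).reverse (tw rk m (ELw r j)
          (rankTog rk m k (tw rk m (ascL r (k + 1)) f))) := by
      have h := ih (by omega) (rankTog rk m k (tw rk m (ascL r (k + 1)) f))
      rwa [← hk2] at h
    rw [step1]
    have step2 : tw rk m (ELw r j) (rankTog rk m k (tw rk m (ascL r (k + 1)) f)) =
        rankTog rk m k (tw rk m (ELw r j) (tw rk m (ascL r (k + 1)) f)) := by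
      refine (tw_rankTog_comm hcov ?_ _).symm
      intro x hx
      have := mem_ELw j x hx
      omega
    rw [step2]
    show _ = tw rk m (ascL r (k + 1)).reverse
      (tw rk m [k] (tw rk m (ELw r j) (tw rk m (ascL r (k + 1)) f)))
    rw [tw_cons, tw_nil]

lemma ELw_invol : ∀ j ≤ r, ∀ f : P → ℕ, IsPPart m f →
    tw rk m (ELw r j) (tw rk m (ELw r j) f) = f := by
  intro j
  induction j with
  | zero =>
    intro _ f hf
    have h0 : ELw r 0 = [r] := by
      show ascL r r = [r]
      exact ascL_top r
    rw [h0, tw_cons, tw_nil, tw_cons, tw_nil, rankTog_invol hcov hf]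
  | succ j ih =>
    intro hj f hf
    have hEL : ELw r (j + 1) = ELw r j ++ ascL r (r - 1 - j) := by
      show ELw r j ++ ascL r (r - (j + 1)) = _
      rw [show r - (j + 1) = r - 1 - j from by omega]
    rw [hEL, tw_append, tw_append, keyL hcov j (by omega) f,
      tw_tw_rev hcov _ (tw_isPPart hcov _ hf)]
    exact ih (by omega) f hf

/-- `Rvac ∘ Row ∘ Rvac = Row⁻¹` on `P`-partitions. -/
lemma rvac_row_rvac {f : P → ℕ} (hf : IsPPart m f) :
    tw rk m (ELw r r) (tw rk m (ascL r 0) (tw rk m (ELw r r) f)) =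
      tw rk m (ascL r 0).reverse f := by
  rcases Nat.eq_zero_or_pos r with rfl | hr
  · have h0 : ELw 0 0 = [0] := by
      show ascL 0 0 = [0]
      exact ascL_top 0
    rw [h0, show ascL 0 0 = [0] from ascL_top 0,
      show ([0] : List ℕ).reverse = [0] from rfl]
    simp only [tw_cons, tw_nil]
    rw [rankTog_invol hcov (rankTog_isPPart hcov hf)]
  · obtain ⟨s, rfl⟩ : ∃ s, r = s + 1 := ⟨r - 1, by omega⟩
    have hEL : ELw (s + 1) (s + 1) = ELw (s + 1) s ++ ascL (s + 1) 0 := by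
      show ELw (s + 1) s ++ ascL (s + 1) (s + 1 - (s + 1)) = _
      norm_num
    have hL : ∀ g : P → ℕ, tw rk m (ELw (s + 1) s) (tw rk m (ascL (s + 1) 0) g) =
        tw rk m (ascL (s + 1) 0).reverse (tw rk m (ELw (s + 1) s) g) := by
      intro g
      have h := keyL (m := m) (r := s + 1) hcov s (by omega) g
      rwa [(by omega : s + 1 - 1 - s = 0)] at h
    rw [hEL, tw_append, tw_append, hL, hL,
      ELw_invol (r := s + 1) hcov s (by omega) _ (tw_isPPart hcov _ hf),
      tw_rev_tw hcov _ hf]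

end A6

section A7
variable {P : Type*} [PartialOrder P] [Fintype P]
variable {rk : P → ℕ} {m r : ℕ}
variable (hcov : ∀ p q : P, p ⋖ q → rk q = rk p + 1)
include hcov

lemma rvac_isPPart {f : P → ℕ} (hf : IsPPart m f) : IsPPart m (rvac rk m r f) := by
  rw [rvac_eq_tw]; exact tw_isPPart hcov _ hf

lemma rvac_rvac {f : P → ℕ} (hf : IsPPart m f) : rvac rk m r (rvac rk m r f) = f := by
  rw [rvac_eq_tw, rvac_eq_tw]
  exact ELw_invol hcov r le_rfl f hf

lemma rowm_isPPart {f : P → ℕ} (hf : IsPPart m f) : IsPPart m (rowm rk m r f) := by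
  rw [rowm_eq_tw]; exact tw_isPPart hcov _ hf

lemma rowm_iter_isPPart (k : ℕ) {f : P → ℕ} (hf : IsPPart m f) :
    IsPPart m ((rowm rk m r)^[k] f) := by
  induction k with
  | zero => exact hf
  | succ k ih => rw [Function.iterate_succ_apply']; exact rowm_isPPart hcov ih

lemma rvac_rowm {f : P → ℕ} (hf : IsPPart m f) :
    rvac rk m r (rowm rk m r f) = tw rk m (ascL r 0).reverse (rvac rk m r f) := by
  rw [rvac_eq_tw, rvac_eq_tw, rowm_eq_tw]
  have h1 := rvac_row_rvac (r := r) (f := tw rk m (ELw r r) f) hcov (tw_isPPart hcov _ hf)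
  rwa [ELw_invol hcov r le_rfl f hf] at h1

lemma rvac_rowm_iter (k : ℕ) {f : P → ℕ} (hf : IsPPart m f) :
    rvac rk m r ((rowm rk m r)^[k] f) =
      (tw rk m (ascL r 0).reverse)^[k] (rvac rk m r f) := by
  induction k with
  | zero => rfl
  | succ k ih =>
    rw [Function.iterate_succ_apply', rvac_rowm hcov (rowm_iter_isPPart hcov k hf), ih]
    exact (Function.iterate_succ_apply' _ _ _).symm

lemma dv_rowm_iter (k : ℕ) {f : P → ℕ} (hf : IsPPart m f) :
    (tw rk m (ascL r 0).reverse)^[k] ((rowm rk m r)^[k] f) = f := by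
  induction k generalizing f with
  | zero => rfl
  | succ k ih =>
    rw [Function.iterate_succ_apply (rowm rk m r), Function.iterate_succ_apply']
    rw [ih (rowm_isPPart hcov hf), rowm_eq_tw]
    exact tw_rev_tw hcov _ hf

omit hcov

lemma rvac_delta (δ : P ≃o P) (hrk : ∀ q, rk (δ q) = rk q) (f : P → ℕ) :
    rvac rk m r (fun x => f (δ x)) = fun x => rvac rk m r f (δ x) := by
  rw [rvac_eq_tw, tw_delta δ hrk]
  funext x
  rw [rvac_eq_tw]

end A7

/-- For a finite graded poset `P`, if `Row^{r(P)+2}` acting on `P`-partitions of height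
`m` (for all `m`) equals the map induced by a poset automorphism `δ` of `P`, then `δ` is
an involution. -/
theorem row_pow_automorphism_involutive {P : Type*} [PartialOrder P] [Fintype P]
    (rk : P → ℕ) (r : ℕ)
    (hcov : ∀ p q : P, p ⋖ q → rk q = rk p + 1)
    (hmin : ∀ p : P, IsMin p → rk p = 0)
    (hmax : ∀ p : P, IsMax p → rk p = r)
    (δ : P ≃o P)
    (h : ∀ m : ℕ, ∀ f, IsPPart m f →
      (rowm rk m r)^[r + 2] f = fun p => f (δ p)) :
    ∀ p : P, δ (δ p) = p := by

  have hrk := rk_delta hcov hmin δ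
  -- Step 1: every `P`-partition is `δ²`-invariant.
  have key : ∀ (m : ℕ) (g : P → ℕ), IsPPart m g → ∀ x, g (δ (δ x)) = g x := by
    intro m g hg
    have hdelta : ∀ f : P → ℕ, IsPPart m f → IsPPart m (fun x => f (δ x)) :=
      fun f hf => ⟨fun x => hf.1 _, hf.2.comp δ.monotone⟩
    -- (∗): for any P-partition g', `g' ∘ δ = Dv^[r+2] g'`
    have star : ∀ g' : P → ℕ, IsPPart m g' →
        (fun x => g' (δ x)) = (tw rk m (ascL r 0).reverse)^[r + 2] g' := by
      intro g' hg'
      have h1 := rvac_rowm_iter (r := r) hcov (r + 2) (rvac_isPPart (r := r) hcov hg')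
      rw [h m _ (rvac_isPPart hcov hg'), rvac_delta δ hrk, rvac_rvac hcov hg'] at h1
      exact h1
    have hC := dv_rowm_iter (r := r) hcov (r + 2) hg
    rw [h m g hg] at hC
    have h3 := star (fun x => g (δ x)) (hdelta g hg)
    intro x
    have e1 : g (δ (δ x)) = (tw rk m (ascL r 0).reverse)^[r + 2] (fun x => g (δ x)) x :=
      congrFun h3 x
    have e2 : (tw rk m (ascL r 0).reverse)^[r + 2] (fun x => g (δ x)) x = g x :=
      congrFun hC x
    rw [e1, e2]
  -- Step 2: `q ≤ δ (δ q)` for every `q`, using an indicator P-partition of height 1.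
  have hle : ∀ q : P, q ≤ δ (δ q) := by
    intro q
    have hg : IsPPart 1 (fun y => if q ≤ y then 1 else 0) := by
      constructor
      · intro y; dsimp only; split <;> omega
      · intro a b hab
        dsimp only
        by_cases h1 : q ≤ a
        · rw [if_pos h1, if_pos (h1.trans hab)]
        · rw [if_neg h1]
          exact Nat.zero_le _
    have h5 : (if q ≤ δ (δ q) then 1 else 0) = (if q ≤ q then 1 else 0) :=
      key 1 _ hg q
    rw [if_pos le_rfl] at h5
    by_contra hqq
    rw [if_neg hqq] at h5
    omega
  -- Step 3: a monotone inflationary permutation of a finite poset is the identity.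
  intro p
  have hinj : Function.Injective fun x : P => δ (δ x) :=
    fun a b hab => δ.injective (δ.injective hab)
  have hchain : ∀ k, (fun x : P => δ (δ x))^[k] p ≤ (fun x : P => δ (δ x))^[k + 1] p := by
    intro k
    rw [Function.iterate_succ_apply']
    exact hle _
  have hmono : Monotone fun k => (fun x : P => δ (δ x))^[k] p :=
    monotone_nat_of_le_succ hchain
  obtain ⟨a, b, hne, heq⟩ :=
    Finite.exists_ne_map_eq_of_infinite fun k : ℕ => (fun x : P => δ (δ x))^[k] p
  have main : ∀ a b : ℕ, a < b →
      (fun x : P => δ (δ x))^[a] p = (fun x : P => δ (δ x))^[b] p → δ (δ p) = p := by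
    intro a b hab heq
    have hb : b = a + (b - a) := by omega
    rw [hb, Function.iterate_add_apply] at heq
    have hfix : (fun x : P => δ (δ x))^[b - a] p = p :=
      ((hinj.iterate a) heq.symm)
    have h1 : δ (δ p) ≤ p := by
      have := hmono (show 1 ≤ b - a by omega)
      simpa [hfix] using this
    exact le_antisymm h1 (hle p)
  rcases lt_or_gt_of_ne hne with hab | hab
  · exact main a b hab heq
  · exact main b a hab heq.symm
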